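/- arXiv:math/0610908 — 4 statements merged into one kernel-verified Lean document; each statement's English description precedes it below -/
import Mathlib

section
/- Let d ≥ 1 be an integer and let β be a real number. For all x, y ∈ ℝ^d with x ≠ y, the determinant of the d×d mixed Hessian matrix of Φ₁(x,y) = |x−y|^{−β}, i.e. of the matrix with entries ∂²Φ₁/∂x_k∂y_ℓ(x,y), equals −(β+1) β^d |x−y|^{−d(β+2)}. In particular, if β > 0 then this determinant is nonzero at every (x,y) with x ≠ y. -/
noncomputable section

/-- The mixed Hessian matrix `(∂²Φ/∂x_k∂y_ℓ)_{k,ℓ}` of a phase `Φ : ℝ^d × ℝ^d → ℝ`,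
differentiating first in `y_ℓ` and then in `x_k`. -/
def mixedHessian (d : ℕ) (Φ : EuclideanSpace ℝ (Fin d) × EuclideanSpace ℝ (Fin d) → ℝ)
    (p : EuclideanSpace ℝ (Fin d) × EuclideanSpace ℝ (Fin d)) : Matrix (Fin d) (Fin d) ℝ :=
  Matrix.of fun k ℓ =>
    fderiv ℝ (fun q => fderiv ℝ Φ q ((0 : EuclideanSpace ℝ (Fin d)), EuclideanSpace.single ℓ 1))
      p (EuclideanSpace.single k 1, (0 : EuclideanSpace ℝ (Fin d)))

open ContinuousLinearMap

variable {d : ℕ}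

private abbrev E (d : ℕ) := EuclideanSpace ℝ (Fin d)

private def Dmap (d : ℕ) : E d × E d →L[ℝ] E d :=
  (ContinuousLinearMap.fst ℝ (E d) (E d)) - (ContinuousLinearMap.snd ℝ (E d) (E d))

private lemma hasFDerivAt_spow (p : ℝ) (q : E d × E d) (hq : q.1 ≠ q.2) :
    HasFDerivAt (fun q : E d × E d => (‖q.1 - q.2‖ ^ 2 : ℝ) ^ p)
      ((p * (‖q.1 - q.2‖ ^ 2 : ℝ) ^ (p - 1)) •
        (2 • ((innerSL ℝ (q.1 - q.2)).comp (Dmap d)))) q := by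
  have hr : q.1 - q.2 ≠ 0 := sub_ne_zero.2 hq
  have hs : (‖q.1 - q.2‖ ^ 2 : ℝ) ≠ 0 := pow_ne_zero _ (norm_ne_zero_iff.2 hr)
  have h1 : HasFDerivAt (fun q : E d × E d => q.1 - q.2) (Dmap d) q :=
    (hasFDerivAt_fst).sub (hasFDerivAt_snd)
  exact (Real.hasDerivAt_rpow_const (p := p) (Or.inl hs)).comp_hasFDerivAt q h1.norm_sq

private lemma phi_eq (β : ℝ) :
    (fun p : E d × E d => ‖p.1 - p.2‖ ^ (-β)) =
      fun q : E d × E d => (‖q.1 - q.2‖ ^ 2 : ℝ) ^ (-β / 2) := by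
  funext q
  rw [← Real.rpow_natCast ‖q.1 - q.2‖ 2, ← Real.rpow_mul (norm_nonneg _)]
  congr 1
  push_cast
  ring

private lemma inner_deriv (β : ℝ) (ℓ : Fin d) (q : E d × E d) (hq : q.1 ≠ q.2) :
    fderiv ℝ (fun p : E d × E d => ‖p.1 - p.2‖ ^ (-β)) q
      ((0 : E d), EuclideanSpace.single ℓ 1)
      = β * ((‖q.1 - q.2‖ ^ 2 : ℝ) ^ (-β / 2 - 1) * ((q.1 - q.2) ℓ)) := by
  rw [phi_eq, (hasFDerivAt_spow (-β/2) q hq).fderiv]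
  simp [Dmap, real_inner_comm, EuclideanSpace.inner_single_left, EuclideanSpace.inner_single_right]
  ring

private lemma entry_eq (β : ℝ) (k ℓ : Fin d) (x y : E d) (hxy : x ≠ y) :
    mixedHessian d (fun p => ‖p.1 - p.2‖ ^ (-β)) (x, y) k ℓ
      = β * ((‖x - y‖ ^ 2 : ℝ) ^ (-β/2 - 1) * (if ℓ = k then (1:ℝ) else 0)
          + ((x - y) ℓ) * ((-β/2 - 1) * (‖x - y‖ ^ 2 : ℝ) ^ (-β/2 - 1 - 1) * (2 * ((x - y) k)))) := by
  have hopen : IsOpen {q : E d × E d | q.1 ≠ q.2} := isOpen_ne_fun continuous_fst continuous_snd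
  have hmem : {q : E d × E d | q.1 ≠ q.2} ∈ nhds ((x, y) : E d × E d) :=
    hopen.mem_nhds (by simpa using hxy)
  have hEv : (fun q : E d × E d =>
      fderiv ℝ (fun p : E d × E d => ‖p.1 - p.2‖ ^ (-β)) q (0, EuclideanSpace.single ℓ 1))
      =ᶠ[nhds ((x, y) : E d × E d)]
      (fun q : E d × E d => β * ((‖q.1 - q.2‖ ^ 2 : ℝ) ^ (-β / 2 - 1) * ((q.1 - q.2) ℓ))) :=
    Filter.eventuallyEq_of_mem hmem (fun q hq => inner_deriv β ℓ q hq)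
  have hP : HasFDerivAt (fun q : E d × E d => (q.1 - q.2) ℓ)
      ((EuclideanSpace.proj ℓ).comp (Dmap d)) ((x, y) : E d × E d) :=
    ((EuclideanSpace.proj ℓ).comp (Dmap d)).hasFDerivAt
  have h1 := hasFDerivAt_spow (d := d) (-β/2 - 1) (x, y) (by simpa using hxy)
  have hG : HasFDerivAt (fun q : E d × E d => β * ((‖q.1 - q.2‖ ^ 2 : ℝ) ^ (-β / 2 - 1) * ((q.1 - q.2) ℓ))) _ (x, y) :=
    (h1.mul hP).const_mul β
  show fderiv ℝ _ (x, y) _ = _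
  rw [hEv.fderiv_eq, hG.fderiv]
  simp [Dmap, real_inner_comm, EuclideanSpace.inner_single_left, EuclideanSpace.inner_single_right,
    EuclideanSpace.single_apply]
  split_ifs <;> ring

/-- Lemma 4.2: for `Φ₁(x,y) = |x-y|^{-β}` and `x ≠ y`, the determinant
of the mixed Hessian equals `-(β+1) β^d |x-y|^{-d(β+2)}`; in particular it is nonzero
when `β > 0`. -/
theorem stmt10 (d : ℕ) (hd : 1 ≤ d) (β : ℝ)
    (x y : EuclideanSpace ℝ (Fin d)) (hxy : x ≠ y) :
    (mixedHessian d
        (fun p : EuclideanSpace ℝ (Fin d) × EuclideanSpace ℝ (Fin d) =>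
          ‖p.1 - p.2‖ ^ (-β)) (x, y)).det
      = -(β + 1) * β ^ d * ‖x - y‖ ^ (-((d : ℝ) * (β + 2))) ∧
    (0 < β →
      (mixedHessian d
        (fun p : EuclideanSpace ℝ (Fin d) × EuclideanSpace ℝ (Fin d) =>
          ‖p.1 - p.2‖ ^ (-β)) (x, y)).det ≠ 0) := by
  have hr : x - y ≠ 0 := sub_ne_zero.2 hxy
  have hn : (0:ℝ) < ‖x - y‖ := norm_pos_iff.2 hr
  set s : ℝ := ‖x - y‖ ^ 2 with hs_def
  have hs : 0 < s := by positivity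
  set u : Fin d → ℝ := fun k => (x - y) k with hu_def
  set v : Fin d → ℝ := fun ℓ => ((-β - 2) / s) * (x - y) ℓ with hv_def
  have hM : mixedHessian d (fun p : EuclideanSpace ℝ (Fin d) × EuclideanSpace ℝ (Fin d) =>
        ‖p.1 - p.2‖ ^ (-β)) (x, y)
      = (β * s ^ (-β/2 - 1)) • (1 + Matrix.replicateCol (Fin 1) u * Matrix.replicateRow (Fin 1) v) := by
    ext k ℓ
    rw [Matrix.smul_apply, entry_eq β k ℓ x y hxy]
    have hsp : s ^ (-β/2 - 1 - 1) = s ^ (-β/2 - 1) / s := by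
      rw [show (-β/2 - 1 - 1 : ℝ) = (-β/2-1) - 1 by ring, Real.rpow_sub hs, Real.rpow_one]
    simp only [Matrix.add_apply, Matrix.one_apply, Matrix.mul_apply,
      Matrix.replicateCol_apply, Matrix.replicateRow_apply, Finset.sum_const, Finset.card_univ,
      Fintype.card_fin, ← hs_def, hsp, smul_eq_mul, hu_def, hv_def]
    rcases eq_or_ne ℓ k with h | h
    · subst h; simp only [if_pos rfl]; field_simp
      linear_combination (β * (x - y) ℓ ^ 2 * 2 + β ^ 2 * (x - y) ℓ ^ 2) * mul_inv_cancel₀ hs.ne'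
    · simp only [if_neg h, if_neg (Ne.symm h)]; field_simp
      linear_combination (β * (x - y) ℓ * (x - y) k * 2 + β ^ 2 * (x - y) ℓ * (x - y) k) * mul_inv_cancel₀ hs.ne'
  have hsum : ∑ i, ((x - y) i)^2 = s := by
    rw [hs_def, EuclideanSpace.norm_eq (x - y), Real.sq_sqrt (by positivity)]
    simp [Real.norm_eq_abs, sq_abs]
  have hdot : dotProduct v u = -β - 2 := by
    have : dotProduct v u = ((-β - 2) / s) * ∑ i, ((x - y) i)^2 := by
      simp [dotProduct, hu_def, hv_def, Finset.mul_sum, sq, mul_assoc]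
    rw [this, hsum]
    field_simp
  have hdet1 : (1 + Matrix.replicateCol (Fin 1) u * Matrix.replicateRow (Fin 1) v).det = -(β+1) := by
    refine (Matrix.det_one_add_replicateCol_mul_replicateRow (ι := Fin 1) u v).trans ?_
    rw [hdot]; ring
  have hpow : (s ^ (-β/2 - 1) : ℝ) ^ d = ‖x - y‖ ^ (-((d:ℝ) * (β + 2))) := by
    rw [← Real.rpow_natCast (s ^ (-β/2-1)) d, ← Real.rpow_mul hs.le,
        hs_def, ← Real.rpow_natCast ‖x - y‖ 2, ← Real.rpow_mul (norm_nonneg _)]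
    congr 1
    push_cast
    ring
  have hdet : (mixedHessian d
      (fun p : EuclideanSpace ℝ (Fin d) × EuclideanSpace ℝ (Fin d) =>
        ‖p.1 - p.2‖ ^ (-β)) (x, y)).det
      = -(β + 1) * β ^ d * ‖x - y‖ ^ (-((d : ℝ) * (β + 2))) := by
    rw [hM, Matrix.det_smul, hdet1, Fintype.card_fin, mul_pow, hpow]; ring
  refine ⟨hdet, fun hβ => ?_⟩
  rw [hdet]
  have h1 : -(β+1) ≠ 0 := by nlinarith
  have h2 : (β:ℝ)^d ≠ 0 := pow_ne_zero _ hβ.ne'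
  have h3 : ‖x - y‖ ^ (-((d:ℝ)*(β+2))) ≠ 0 := (Real.rpow_pos_of_pos hn _).ne'
  exact mul_ne_zero (mul_ne_zero h1 h2) h3
end
end

section
/- Let n ≥ 1 be an integer and let β, q, b_1, …, b_n be real numbers. Then det( βq (I_{2n} − (β+2) E_{11}) + 2J + 2B ) = −( β²(β+1) q² + 2β² b_1 q − 4 b_1² − 4 ) · ∏_{i=2}^n ( (βq + 2b_i)² + 4 ), where I_{2n} is the 2n×2n identity matrix and E_{11} is the 2n×2n matrix whose (1,1) entry is 1 and all other entries are 0. -/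
noncomputable section

/-- The standard symplectic matrix `J = [[0, Iₙ], [-Iₙ, 0]]`. -/
def symJ (n : ℕ) : Matrix (Fin n ⊕ Fin n) (Fin n ⊕ Fin n) ℝ :=
  Matrix.fromBlocks 0 1 (-1) 0

/-- Grouping equivalence. -/
def grpEquiv (n : ℕ) : (Fin n ⊕ Fin n) ≃ (Fin 2 × Fin n) where
  toFun := Sum.elim (fun i => (0, i)) (fun i => (1, i))
  invFun := fun p => if p.1 = 0 then Sum.inl p.2 else Sum.inr p.2
  left_inv := by rintro (i | i) <;> simp
  right_inv := by rintro ⟨a, i⟩; fin_cases a <;> simp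

/-- The determinant identity
`det(βq(I - (β+2)E₁₁) + 2J + 2B) = -(β²(β+1)q² + 2β²b₁q - 4b₁² - 4)·∏_{i=2}^n((βq+2bᵢ)²+4)`
for `B = diag(b₁,…,bₙ,b₁,…,bₙ)`. -/
theorem stmt14 (n : ℕ) (hn : 0 < n) (β q : ℝ) (b : Fin n → ℝ) :
    ((β * q) • ((1 : Matrix (Fin n ⊕ Fin n) (Fin n ⊕ Fin n) ℝ) -
          (β + 2) • Matrix.single (Sum.inl (⟨0, hn⟩ : Fin n)) (Sum.inl (⟨0, hn⟩ : Fin n)) (1 : ℝ)) +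
        (2 : ℝ) • symJ n + (2 : ℝ) • Matrix.diagonal (Sum.elim b b)).det
      = -(β ^ 2 * (β + 1) * q ^ 2 + 2 * β ^ 2 * b ⟨0, hn⟩ * q - 4 * b ⟨0, hn⟩ ^ 2 - 4) *
          ∏ i ∈ Finset.univ.erase (⟨0, hn⟩ : Fin n), ((β * q + 2 * b i) ^ 2 + 4) := by
  set z : Fin n := ⟨0, hn⟩ with hz
  set M' : Fin n → Matrix (Fin 2) (Fin 2) ℝ := fun i =>
    !![(if i = z then β * q * (1 - (β + 2)) else β * q) + 2 * b i, 2;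
       -2, β * q + 2 * b i] with hM'
  have hM : ((β * q) • ((1 : Matrix (Fin n ⊕ Fin n) (Fin n ⊕ Fin n) ℝ) -
          (β + 2) • Matrix.single (Sum.inl z) (Sum.inl z) (1 : ℝ)) +
        (2 : ℝ) • symJ n + (2 : ℝ) • Matrix.diagonal (Sum.elim b b))
      = (Matrix.blockDiagonal M').submatrix (grpEquiv n) (grpEquiv n) := by
    ext x y
    rcases x with i | i <;> rcases y with j | j <;>
      simp [Matrix.add_apply, Matrix.smul_apply, Matrix.sub_apply, Matrix.one_apply,
        Matrix.single, symJ, Matrix.fromBlocks, Matrix.diagonal_apply,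
        Matrix.submatrix_apply, grpEquiv, Matrix.blockDiagonal_apply, hM'] <;>
      rcases eq_or_ne i j with h | h <;>
      rcases eq_or_ne i z with hiz | hiz <;>
      rcases eq_or_ne j z with hjz | hjz <;>
      simp_all <;> first | (intro hzx; simp_all) | (simp_all [eq_comm]; try ring)
  rw [hM, Matrix.det_submatrix_equiv_self, Matrix.det_blockDiagonal]
  have hdet : ∀ i, (M' i).det =
      (if i = z then β * q * (1 - (β + 2)) else β * q) * (β * q + 2 * b i)
        + 2 * b i * (β * q + 2 * b i) + 4 := by
    intro i
    rw [hM', Matrix.det_fin_two_of]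
    ring
  rw [Finset.prod_congr rfl (fun i _ => hdet i),
    ← Finset.mul_prod_erase Finset.univ _ (Finset.mem_univ z)]
  congr 1
  · rw [if_pos rfl]; ring
  · exact Finset.prod_congr rfl fun i hi => by
      rw [if_neg (Finset.ne_of_mem_erase hi)]; ring
end
end

section
/- Let n ≥ 1 be an integer and let β, q, b_1, …, b_n be real numbers. Then the 2n×2n matrix βq (I_{2n} − (β+2) E_{11}) + 2J + 2B has rank at least 2n−1; equivalently, its kernel has dimension at most 1. -/
noncomputable section

lemma stmt15_row1 (n : ℕ) (hn : 0 < n) (β q : ℝ) (b : Fin n → ℝ)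
    (x : Fin n ⊕ Fin n → ℝ) (i : Fin n) :
    (((β * q) • ((1 : Matrix (Fin n ⊕ Fin n) (Fin n ⊕ Fin n) ℝ) -
            (β + 2) • Matrix.single (Sum.inl (⟨0, hn⟩ : Fin n)) (Sum.inl (⟨0, hn⟩ : Fin n)) (1 : ℝ)) +
          (2 : ℝ) • symJ n + (2 : ℝ) • Matrix.diagonal (Sum.elim b b)).mulVec x) (Sum.inl i)
      = (β * q + 2 * b i) * x (Sum.inl i)
          - (if (⟨0, hn⟩ : Fin n) = i then β * q * (β + 2) * x (Sum.inl ⟨0, hn⟩) else 0)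
          + 2 * x (Sum.inr i) := by
  rcases eq_or_ne (⟨0, hn⟩ : Fin n) i with h | h <;>
  simp [h, Matrix.mulVec, dotProduct, Fintype.sum_sum_type, symJ,
    Matrix.fromBlocks, Matrix.one_apply, Matrix.diagonal_apply, Matrix.single,
    mul_ite, ite_mul, Finset.sum_ite_eq, Finset.sum_ite_eq', sub_mul, mul_comm,
    Finset.sum_sub_distrib, Finset.sum_add_distrib] <;>
  · rw [Fintype.sum_eq_single i]
    · simp only [if_pos trivial] <;> ring
    · intro j hj
      simp [Ne.symm hj]

lemma stmt15_row2 (n : ℕ) (hn : 0 < n) (β q : ℝ) (b : Fin n → ℝ)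
    (x : Fin n ⊕ Fin n → ℝ) (i : Fin n) :
    (((β * q) • ((1 : Matrix (Fin n ⊕ Fin n) (Fin n ⊕ Fin n) ℝ) -
            (β + 2) • Matrix.single (Sum.inl (⟨0, hn⟩ : Fin n)) (Sum.inl (⟨0, hn⟩ : Fin n)) (1 : ℝ)) +
          (2 : ℝ) • symJ n + (2 : ℝ) • Matrix.diagonal (Sum.elim b b)).mulVec x) (Sum.inr i)
      = -2 * x (Sum.inl i) + (β * q + 2 * b i) * x (Sum.inr i) := by
  simp [Matrix.mulVec, dotProduct, Fintype.sum_sum_type, symJ,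
    Matrix.fromBlocks, Matrix.one_apply, Matrix.diagonal_apply, Matrix.single,
    mul_ite, ite_mul, Finset.sum_ite_eq, Finset.sum_ite_eq', sub_mul, mul_comm,
    Finset.sum_sub_distrib, Finset.sum_add_distrib]
  rw [Fintype.sum_eq_single i]
  · simp only [if_pos trivial] <;> ring
  · intro j hj
    simp [Ne.symm hj]

/-- The matrix `βq(I - (β+2)E₁₁) + 2J + 2B`, with
`B = diag(b₁,…,bₙ,b₁,…,bₙ)`, has rank at least `2n - 1` (equivalently, kernel of
dimension at most `1`). -/
theorem stmt15 (n : ℕ) (hn : 0 < n) (β q : ℝ) (b : Fin n → ℝ) :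
    2 * n - 1 ≤
      ((β * q) • ((1 : Matrix (Fin n ⊕ Fin n) (Fin n ⊕ Fin n) ℝ) -
            (β + 2) • Matrix.single (Sum.inl (⟨0, hn⟩ : Fin n)) (Sum.inl (⟨0, hn⟩ : Fin n)) (1 : ℝ)) +
          (2 : ℝ) • symJ n + (2 : ℝ) • Matrix.diagonal (Sum.elim b b)).rank := by
  classical
  set z : Fin n := ⟨0, hn⟩ with hz
  set M := ((β * q) • ((1 : Matrix (Fin n ⊕ Fin n) (Fin n ⊕ Fin n) ℝ) -
            (β + 2) • Matrix.single (Sum.inl z) (Sum.inl z) (1 : ℝ)) +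
          (2 : ℝ) • symJ n + (2 : ℝ) • Matrix.diagonal (Sum.elim b b)) with hM
  set v : Fin n ⊕ Fin n → ℝ :=
    Sum.elim (fun i => if i = z then β * q + 2 * b z else 0)
      (fun i => if i = z then 2 else 0) with hv
  have hvne : v ≠ 0 := by
    intro h
    have := congrFun h (Sum.inr z)
    simp [hv] at this
  have hker : LinearMap.ker M.mulVecLin ≤ Submodule.span ℝ {v} := by
    intro x hx
    have hx0 : M.mulVec x = 0 := by
      simpa [Matrix.mulVecLin_apply] using hx
    have e1 : ∀ i : Fin n, (β * q + 2 * b i) * x (Sum.inl i)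
        - (if z = i then β * q * (β + 2) * x (Sum.inl z) else 0)
        + 2 * x (Sum.inr i) = 0 := by
      intro i
      have := congrFun hx0 (Sum.inl i)
      rw [stmt15_row1 n hn β q b x i] at this
      simpa using this
    have e2 : ∀ i : Fin n, -2 * x (Sum.inl i) + (β * q + 2 * b i) * x (Sum.inr i) = 0 := by
      intro i
      have := congrFun hx0 (Sum.inr i)
      rw [stmt15_row2 n hn β q b x i] at this
      simpa using this
    have hzero : ∀ i : Fin n, i ≠ z → x (Sum.inl i) = 0 ∧ x (Sum.inr i) = 0 := by
      intro i hi
      have h1 := e1 i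
      rw [if_neg (Ne.symm hi)] at h1
      have h2 := e2 i
      set a := β * q + 2 * b i with ha
      have hl : (a ^ 2 + 4) * x (Sum.inl i) = 0 := by linear_combination a * h1 - 2 * h2
      have hr : (a ^ 2 + 4) * x (Sum.inr i) = 0 := by linear_combination 2 * h1 + a * h2
      have hane : a ^ 2 + 4 ≠ 0 := by positivity
      exact ⟨by
        rcases mul_eq_zero.mp hl with h | h
        · exact absurd h hane
        · exact h, by
        rcases mul_eq_zero.mp hr with h | h
        · exact absurd h hane
        · exact h⟩
    have hxv : x = (x (Sum.inr z) / 2) • v := by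
      funext j
      cases j with
      | inl i =>
        rcases eq_or_ne i z with h | h
        · subst h
          have h2 := e2 z
          simp only [hv, Pi.smul_apply, Sum.elim_inl, if_pos rfl, eq_self_iff_true,
            if_true, smul_eq_mul]
          linarith
        · simp only [hv, Pi.smul_apply, Sum.elim_inl, if_neg h, smul_eq_mul, mul_zero]
          exact (hzero i h).1
      | inr i =>
        rcases eq_or_ne i z with h | h
        · subst h
          simp only [hv, Pi.smul_apply, Sum.elim_inr, if_pos rfl, eq_self_iff_true,
            if_true, smul_eq_mul]
          ring
        · simp only [hv, Pi.smul_apply, Sum.elim_inr, if_neg h, smul_eq_mul, mul_zero]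
          exact (hzero i h).2
    exact Submodule.mem_span_singleton.mpr ⟨x (Sum.inr z) / 2, hxv.symm⟩
  have hnull : Module.finrank ℝ (LinearMap.ker M.mulVecLin) ≤ 1 := by
    calc Module.finrank ℝ (LinearMap.ker M.mulVecLin)
        ≤ Module.finrank ℝ (Submodule.span ℝ {v}) := Submodule.finrank_mono hker
      _ = 1 := finrank_span_singleton hvne
  have hrn := LinearMap.finrank_range_add_finrank_ker M.mulVecLin
  rw [Module.finrank_fintype_fun_eq_card] at hrn
  simp only [Fintype.card_sum, Fintype.card_fin] at hrn
  have hrank : M.rank = Module.finrank ℝ (LinearMap.range M.mulVecLin) := rfl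
  omega
end
end

section
/- Let n ≥ 1 be an integer, β > 0, Q > 0 and b_1, …, b_n real numbers, and suppose b_1 = −(β+1)Q. Then | det( βQ (I_{2n} − (β+2) E_{11}) + 2J + 2B ) | ≥ 4^n. Consequently, the determinant of this matrix and its derivative in Q cannot vanish simultaneously, i.e. the determinant vanishes only to first order on its zero set. -/
noncomputable section

/-- The matrix `βq(I - (β+2)E₁₁) + 2J + 2B` with `B = diag(b₁,…,bₙ,b₁,…,bₙ)`. -/
def foldMatrix (n : ℕ) (hn : 0 < n) (β : ℝ) (b : Fin n → ℝ) (q : ℝ) :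
    Matrix (Fin n ⊕ Fin n) (Fin n ⊕ Fin n) ℝ :=
  (β * q) • ((1 : Matrix (Fin n ⊕ Fin n) (Fin n ⊕ Fin n) ℝ) -
      (β + 2) • Matrix.single (Sum.inl ⟨0, hn⟩) (Sum.inl ⟨0, hn⟩) (1 : ℝ)) +
    (2 : ℝ) • symJ n + (2 : ℝ) • Matrix.diagonal (Sum.elim b b)

/-- The pairing equivalence sending `inl i ↦ (0, i)` and `inr i ↦ (1, i)`. -/
def pairEquiv (n : ℕ) : Fin n ⊕ Fin n ≃ Fin 2 × Fin n where
  toFun := Sum.elim (fun i => (0, i)) (fun i => (1, i))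
  invFun := fun p => if p.1 = 0 then Sum.inl p.2 else Sum.inr p.2
  left_inv := by rintro (i | i) <;> simp
  right_inv := by rintro ⟨k, i⟩; fin_cases k <;> simp

lemma foldMatrix_eq (n : ℕ) (hn : 0 < n) (β : ℝ) (b : Fin n → ℝ) (q : ℝ) :
    foldMatrix n hn β b q =
      (Matrix.blockDiagonal (fun i : Fin n =>
        !![β * q * (if i = ⟨0, hn⟩ then -(β+1) else 1) + 2 * b i, 2;
           -2, β * q + 2 * b i])).submatrix (pairEquiv n) (pairEquiv n) := by
  ext x y
  rcases x with i | i <;> rcases y with j | j <;>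
    simp only [foldMatrix, symJ, pairEquiv, Matrix.blockDiagonal_apply,
      Matrix.submatrix_apply, Equiv.coe_fn_mk, Sum.elim_inl, Sum.elim_inr,
      Matrix.add_apply, Matrix.smul_apply, Matrix.sub_apply,
      Matrix.one_apply, Matrix.diagonal_apply, Matrix.single,
      Matrix.fromBlocks_apply₁₁, Matrix.fromBlocks_apply₁₂,
      Matrix.fromBlocks_apply₂₁, Matrix.fromBlocks_apply₂₂,
      Matrix.of_apply, Matrix.zero_apply, Matrix.neg_apply, smul_eq_mul,
      Sum.inl.injEq, Sum.inr.injEq, reduceCtorEq]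
  -- inl inl
  · by_cases h : i = j
    · subst h
      by_cases h0 : i = (⟨0, hn⟩ : Fin n)
      · subst h0
        simp only [eq_self_iff_true, if_true, if_false, and_false, false_and, and_self, and_true, true_and, Matrix.cons_val', Matrix.cons_val_zero, Matrix.cons_val_one, Matrix.head_cons, Matrix.head_fin_const, Matrix.empty_val', Matrix.cons_val_fin_one] <;> ring
      · have h0'' : ¬((⟨0, hn⟩ : Fin n) = i) := fun hh => h0 hh.symm
        simp only [eq_self_iff_true, if_true, if_false, and_false, false_and, and_self, and_true, true_and, Matrix.cons_val', Matrix.cons_val_zero, Matrix.cons_val_one, Matrix.head_cons, Matrix.head_fin_const, Matrix.empty_val', Matrix.cons_val_fin_one, if_neg h0'', if_neg h0] <;> ring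
    · have h' : ¬((⟨0, hn⟩ : Fin n) = i ∧ (⟨0, hn⟩ : Fin n) = j) :=
        fun hh => h (hh.1.symm.trans hh.2)
      simp only [eq_self_iff_true, if_true, if_false, and_false, false_and, and_self, and_true, true_and, Matrix.cons_val', Matrix.cons_val_zero, Matrix.cons_val_one, Matrix.head_cons, Matrix.head_fin_const, Matrix.empty_val', Matrix.cons_val_fin_one, if_neg h, if_neg h'] <;> ring
  -- inl inr
  · by_cases h : i = j
    · subst h; simp only [eq_self_iff_true, if_true, if_false, and_false, false_and, and_self, and_true, true_and, Matrix.cons_val', Matrix.cons_val_zero, Matrix.cons_val_one, Matrix.head_cons, Matrix.head_fin_const, Matrix.empty_val', Matrix.cons_val_fin_one] <;> ring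
    · simp only [eq_self_iff_true, if_true, if_false, and_false, false_and, and_self, and_true, true_and, Matrix.cons_val', Matrix.cons_val_zero, Matrix.cons_val_one, Matrix.head_cons, Matrix.head_fin_const, Matrix.empty_val', Matrix.cons_val_fin_one, if_neg h] <;> ring
  -- inr inl
  · by_cases h : i = j
    · subst h; simp only [eq_self_iff_true, if_true, if_false, and_false, false_and, and_self, and_true, true_and, Matrix.cons_val', Matrix.cons_val_zero, Matrix.cons_val_one, Matrix.head_cons, Matrix.head_fin_const, Matrix.empty_val', Matrix.cons_val_fin_one] <;> ring
    · simp only [eq_self_iff_true, if_true, if_false, and_false, false_and, and_self, and_true, true_and, Matrix.cons_val', Matrix.cons_val_zero, Matrix.cons_val_one, Matrix.head_cons, Matrix.head_fin_const, Matrix.empty_val', Matrix.cons_val_fin_one, if_neg h] <;> ring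
  -- inr inr
  · by_cases h : i = j
    · subst h; simp only [eq_self_iff_true, if_true, if_false, and_false, false_and, and_self, and_true, true_and, Matrix.cons_val', Matrix.cons_val_zero, Matrix.cons_val_one, Matrix.head_cons, Matrix.head_fin_const, Matrix.empty_val', Matrix.cons_val_fin_one] <;> ring
    · simp only [eq_self_iff_true, if_true, if_false, and_false, false_and, and_self, and_true, true_and, Matrix.cons_val', Matrix.cons_val_zero, Matrix.cons_val_one, Matrix.head_cons, Matrix.head_fin_const, Matrix.empty_val', Matrix.cons_val_fin_one, if_neg h] <;> ring

lemma foldMatrix_det (n : ℕ) (hn : 0 < n) (β : ℝ) (b : Fin n → ℝ) (q : ℝ) :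
    (foldMatrix n hn β b q).det = ∏ i : Fin n,
      ((β * q * (if i = ⟨0, hn⟩ then -(β+1) else 1) + 2 * b i) * (β * q + 2 * b i) + 4) := by
  rw [foldMatrix_eq, Matrix.det_submatrix_equiv_self, Matrix.det_blockDiagonal]
  refine Finset.prod_congr rfl fun i _ => ?_
  rw [Matrix.det_fin_two_of]
  ring

/-- If `b₁ = -(β+1)Q` (the vanishing of the gradient of the Hessian
determinant) then `|det(βQ(I - (β+2)E₁₁) + 2J + 2B)| ≥ 4ⁿ`; consequently the determinant
and its derivative in `Q` cannot vanish simultaneously, i.e. the determinant vanishes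
only to first order on its zero set. -/
theorem stmt16 (n : ℕ) (hn : 0 < n) (β Q : ℝ) (hβ : 0 < β) (hQ : 0 < Q)
    (b : Fin n → ℝ) (hb : b ⟨0, hn⟩ = -(β + 1) * Q) :
    (4 : ℝ) ^ n ≤ |(foldMatrix n hn β b Q).det| ∧
    ¬((foldMatrix n hn β b Q).det = 0 ∧
        deriv (fun q : ℝ => (foldMatrix n hn β b q).det) Q = 0) := by
  have hfac : ∀ i : Fin n, (4 : ℝ) ≤
      (β * Q * (if i = ⟨0, hn⟩ then -(β+1) else 1) + 2 * b i) * (β * Q + 2 * b i) + 4 := by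
    intro i
    by_cases h0 : i = ⟨0, hn⟩
    · subst h0
      rw [if_pos rfl, hb]
      nlinarith [mul_nonneg (by linarith : (0:ℝ) ≤ β + 1) (sq_nonneg ((β + 2) * Q))]
    · simp only [if_neg h0]
      nlinarith [sq_nonneg (β * Q + 2 * b i)]
  have hdet : (4 : ℝ) ^ n ≤ (foldMatrix n hn β b Q).det := by
    rw [foldMatrix_det]
    calc (4 : ℝ) ^ n = ∏ _i : Fin n, (4 : ℝ) := by
          simp [Finset.prod_const]
      _ ≤ _ := Finset.prod_le_prod (fun i _ => by norm_num) (fun i _ => hfac i)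
  have hpos : (0 : ℝ) < (foldMatrix n hn β b Q).det :=
    lt_of_lt_of_le (by positivity) hdet
  refine ⟨?_, ?_⟩
  · rw [abs_of_pos hpos]; exact hdet
  · rintro ⟨h, -⟩
    exact absurd h hpos.ne'
end
end
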